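/- Let k be a field of odd characteristic and g ∈ k× a non-square. Let K₁ be the class-2 quotient of L/⟨x₁₃, x₁₄, x₂₃, x₂₄⟩ where L is the free Lie algebra on x₁,…,x₄ over k. Then K₁ contains a nonzero element whose centralizer in K₁ has k-dimension 5. -/

import Mathlib

open FreeLieAlgebra

set_option maxHeartbeats 1000000
set_option maxRecDepth 8000

/-! ### A 6-dimensional model Lie algebra: two commuting Heisenberg pieces. -/

def MM (k : Type*) := Fin 6 → k

namespace MM
variable {k : Type*} [Field k]

instance : AddCommGroup (MM k) := inferInstanceAs (AddCommGroup (Fin 6 → k))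
instance : Module k (MM k) := inferInstanceAs (Module k (Fin 6 → k))
instance : Module.Finite k (MM k) := inferInstanceAs (Module.Finite k (Fin 6 → k))

def br (u v : MM k) : MM k := fun i =>
  if i = 4 then u 0 * v 1 - u 1 * v 0 else if i = 5 then u 2 * v 3 - u 3 * v 2 else 0

lemma addap (u v : MM k) (i : Fin 6) : (u + v) i = u i + v i := rfl
lemma smulap (c : k) (u : MM k) (i : Fin 6) : (c • u) i = c * u i := rfl
lemma zeroap (i : Fin 6) : (0 : MM k) i = 0 := rfl
lemma negap (u : MM k) (i : Fin 6) : (-u) i = -(u i) := rfl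

instance : LieRing (MM k) where
  bracket := br
  add_lie u v w := by funext i; fin_cases i <;> simp [br, addap] <;> ring
  lie_add u v w := by funext i; fin_cases i <;> simp [br, addap] <;> ring
  lie_self u := by funext i; fin_cases i <;> simp [br, zeroap] <;> ring
  leibniz_lie u v w := by funext i; fin_cases i <;> simp [br, addap, zeroap] <;> ring

lemma lie_def (u v : MM k) : ⁅u, v⁆ = br u v := rfl

instance : LieAlgebra k (MM k) where
  lie_smul c u v := by funext i; fin_cases i <;> simp [lie_def, br, smulap] <;> ring

def E (i : Fin 6) : MM k := fun j => if j = i then 1 else 0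

/-- Bracket table on basis vectors. -/
lemma E_br (i j : Fin 6) : ⁅(E i : MM k), E j⁆ =
    (if i = 0 ∧ j = 1 then E 4 else if i = 1 ∧ j = 0 then -E 4
      else if i = 2 ∧ j = 3 then E 5 else if i = 3 ∧ j = 2 then -E 5 else (0 : MM k)) := by
  fin_cases i <;> fin_cases j <;>
    (funext l; fin_cases l <;> simp [lie_def, br, E, negap, zeroap])

/-- Elements vanishing in first four coordinates are central. -/
lemma lie_central (u v : MM k) (h0 : v 0 = 0) (h1 : v 1 = 0) (h2 : v 2 = 0)
    (h3 : v 3 = 0) : ⁅u, v⁆ = 0 := by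
  funext i; fin_cases i <;> simp [lie_def, br, zeroap, h0, h1, h2, h3]

/-- Brackets vanish in first four coordinates. -/
lemma br_lower (u v : MM k) (i : Fin 6) (hi : i.val < 4) : ⁅u, v⁆ i = 0 := by
  fin_cases i <;> simp_all [lie_def, br]

noncomputable def bb : Module.Basis (Fin 6) k (MM k) := Pi.basisFun k (Fin 6)

lemma bb_apply (i : Fin 6) : (bb : Module.Basis (Fin 6) k (MM k)) i = E i := by
  funext j
  show (Pi.basisFun k (Fin 6)) i j = E i j
  simp [Pi.basisFun_apply, Pi.single_apply, E]

/-- The central ideal of coordinates 4,5. -/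
def CC : LieIdeal k (MM k) where
  carrier := {u | u 0 = 0 ∧ u 1 = 0 ∧ u 2 = 0 ∧ u 3 = 0}
  add_mem' := by
    rintro u v ⟨a0, a1, a2, a3⟩ ⟨b0, b1, b2, b3⟩
    exact ⟨by simp [addap, a0, b0], by simp [addap, a1, b1],
      by simp [addap, a2, b2], by simp [addap, a3, b3]⟩
  zero_mem' := ⟨rfl, rfl, rfl, rfl⟩
  smul_mem' := by
    rintro c u ⟨a0, a1, a2, a3⟩
    exact ⟨by simp [smulap, a0], by simp [smulap, a1],
      by simp [smulap, a2], by simp [smulap, a3]⟩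
  lie_mem := by
    intro u v _
    exact ⟨br_lower u v 0 (by decide), br_lower u v 1 (by decide),
      br_lower u v 2 (by decide), br_lower u v 3 (by decide)⟩

lemma mem_CC_iff (u : MM k) : u ∈ (CC : LieIdeal k (MM k)) ↔
    (u 0 = 0 ∧ u 1 = 0 ∧ u 2 = 0 ∧ u 3 = 0) := Iff.rfl

end MM

/-- Lift of a Lie algebra hom through a quotient by an ideal inside its kernel. -/
def lieQuotLift {R L L' : Type*} [CommRing R] [LieRing L] [LieAlgebra R L]
    [LieRing L'] [LieAlgebra R L'] (I : LieIdeal R L) (f : L →ₗ⁅R⁆ L')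
    (h : ∀ a ∈ I, f a = 0) : (L ⧸ I) →ₗ⁅R⁆ L' :=
  { I.toSubmodule.liftQ f.toLinearMap (fun a ha => h a ha) with
    map_lie' := by
      intro u v
      obtain ⟨a, rfl⟩ := LieSubmodule.Quotient.surjective_mk' I u
      obtain ⟨b, rfl⟩ := LieSubmodule.Quotient.surjective_mk' I v
      exact f.map_lie a b }

@[simp] lemma lieQuotLift_mk {R L L' : Type*} [CommRing R] [LieRing L] [LieAlgebra R L]
    [LieRing L'] [LieAlgebra R L'] (I : LieIdeal R L) (f : L →ₗ⁅R⁆ L')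
    (h : ∀ a ∈ I, f a = 0) (a : L) :
    lieQuotLift I f h (LieSubmodule.Quotient.mk' I a) = f a := rfl

section Main

variable (k : Type*) [Field k]

/-- The free Lie algebra on four generators. -/
abbrev FL := FreeLieAlgebra k (Fin 4)

/-- The generators. -/
noncomputable def xx : Fin 4 → FL k := FreeLieAlgebra.of k

/-- The relation ideal. -/
noncomputable def R1 : LieIdeal k (FL k) := LieSubmodule.lieSpan k (FL k)
  {⁅xx k 0, xx k 2⁆, ⁅xx k 0, xx k 3⁆, ⁅xx k 1, xx k 2⁆, ⁅xx k 1, xx k 3⁆}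

/-- The quotient `L/(x₁₃,x₁₄,x₂₃,x₂₄)`. -/
abbrev AA := FL k ⧸ R1 k

/-- The second term of the lower central series. -/
noncomputable def LCS2 : LieIdeal k (AA k) :=
  LieModule.lowerCentralSeries k (AA k) (AA k) 2

/-- The class-2 quotient `K₁`. -/
abbrev KK := AA k ⧸ LCS2 k

/-- Images of the basis vectors of `MM` under the lift. -/
noncomputable def Ev : Fin 4 → MM k := fun i => MM.E (Fin.castLE (by omega) i)

/-- The evaluation homomorphism `FL → MM`. -/
noncomputable def φφ : FL k →ₗ⁅k⁆ MM k := FreeLieAlgebra.lift k (Ev k)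

lemma φφ_of (i : Fin 4) : φφ k (xx k i) = Ev k i := FreeLieAlgebra.lift_of_apply _ i

lemma R1_le_ker : R1 k ≤ (φφ k).ker := by
  apply LieSubmodule.lieSpan_le.mpr
  intro a ha
  simp only [Set.mem_insert_iff, Set.mem_singleton_iff] at ha
  rcases ha with rfl | rfl | rfl | rfl <;>
    · simp only [SetLike.mem_coe, LieHom.mem_ker, LieHom.map_lie, φφ_of]
      simp only [Ev]
      funext l
      fin_cases l <;> simp +decide [MM.lie_def, MM.br, MM.E, MM.zeroap]

/-- The induced homomorphism `AA → MM`. -/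
noncomputable def φφ' : AA k →ₗ⁅k⁆ MM k :=
  lieQuotLift (R1 k) (φφ k) (fun a ha => LieHom.mem_ker.mp (R1_le_ker k ha))

lemma LCS2_le_ker : ∀ a ∈ LCS2 k, φφ' k a = 0 := by
  have h2 : LCS2 k = ⁅(⊤ : LieIdeal k (AA k)),
      ⁅(⊤ : LieIdeal k (AA k)), (⊤ : LieIdeal k (AA k))⁆⁆ := by
    unfold LCS2
    rw [show (2 : ℕ) = 0 + 1 + 1 from rfl, LieModule.lowerCentralSeries_succ,
      LieModule.lowerCentralSeries_succ, LieModule.lowerCentralSeries_zero]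
  have hin : ⁅(⊤ : LieIdeal k (AA k)), (⊤ : LieIdeal k (AA k))⁆ ≤
      LieIdeal.comap (φφ' k) MM.CC := by
    rw [LieSubmodule.lie_le_iff]
    intro a _ b _
    rw [LieIdeal.mem_comap, LieHom.map_lie]
    exact (MM.mem_CC_iff _).mpr
      ⟨MM.br_lower _ _ 0 (by decide), MM.br_lower _ _ 1 (by decide),
       MM.br_lower _ _ 2 (by decide), MM.br_lower _ _ 3 (by decide)⟩
  have hle : LCS2 k ≤ (φφ' k).ker := by
    rw [h2, LieSubmodule.lie_le_iff]
    intro a _ b hb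
    rw [LieHom.mem_ker, LieHom.map_lie]
    obtain ⟨c0, c1, c2, c3⟩ := (MM.mem_CC_iff _).mp (LieIdeal.mem_comap.mp (hin hb))
    exact MM.lie_central _ _ c0 c1 c2 c3
  exact fun a ha => LieHom.mem_ker.mp (hle ha)

/-- The induced homomorphism `KK → MM`. -/
noncomputable def ψψ : KK k →ₗ⁅k⁆ MM k := lieQuotLift (LCS2 k) (φφ' k) (LCS2_le_ker k)

/-- The projection `FL → KK` as a Lie algebra homomorphism. -/
noncomputable def ππ : FL k →ₗ⁅k⁆ KK k :=
  { toLinearMap := ((LCS2 k).toSubmodule.mkQ).comp ((R1 k).toSubmodule.mkQ)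
    map_lie' := rfl }

lemma ψψ_ππ (a : FL k) : ψψ k (ππ k a) = φφ k a := rfl

lemma ππ_surj : Function.Surjective (ππ k) := fun y => by
  obtain ⟨b, rfl⟩ := Submodule.Quotient.mk_surjective _ y
  obtain ⟨a, rfl⟩ := Submodule.Quotient.mk_surjective _ b
  exact ⟨a, rfl⟩

lemma Ktrip (a b c : KK k) : ⁅a, ⁅b, c⁆⁆ = 0 := by
  obtain ⟨a, rfl⟩ := LieSubmodule.Quotient.surjective_mk' (LCS2 k) a
  obtain ⟨b, rfl⟩ := LieSubmodule.Quotient.surjective_mk' (LCS2 k) b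
  obtain ⟨c, rfl⟩ := LieSubmodule.Quotient.surjective_mk' (LCS2 k) c
  have h1 : (⁅LieSubmodule.Quotient.mk' (LCS2 k) a, ⁅LieSubmodule.Quotient.mk' (LCS2 k) b,
      LieSubmodule.Quotient.mk' (LCS2 k) c⁆⁆ : KK k)
      = LieSubmodule.Quotient.mk' (LCS2 k) ⁅a, ⁅b, c⁆⁆ := rfl
  rw [h1]
  apply (LieSubmodule.Quotient.mk_eq_zero _).mpr
  show ⁅a, ⁅b, c⁆⁆ ∈ LCS2 k
  unfold LCS2
  rw [show (2 : ℕ) = 0 + 1 + 1 from rfl, LieModule.lowerCentralSeries_succ]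
  exact LieSubmodule.lie_mem_lie (LieSubmodule.mem_top a)
    (by rw [LieModule.lowerCentralSeries_succ, LieModule.lowerCentralSeries_zero]
        exact LieSubmodule.lie_mem_lie (LieSubmodule.mem_top b) (LieSubmodule.mem_top c))

/-- Images in `KK` of the six basis vectors. -/
noncomputable def FF : Fin 6 → KK k :=
  ![ππ k (xx k 0), ππ k (xx k 1), ππ k (xx k 2), ππ k (xx k 3),
    ππ k ⁅xx k 0, xx k 1⁆, ππ k ⁅xx k 2, xx k 3⁆]

lemma ππ_R1 (a : FL k) (ha : a ∈ R1 k) : ππ k a = 0 := by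
  show (LCS2 k).toSubmodule.mkQ ((R1 k).toSubmodule.mkQ a) = 0
  rw [show (R1 k).toSubmodule.mkQ a = 0 from (Submodule.Quotient.mk_eq_zero _).mpr ha,
    map_zero]

lemma FF_br (i j : Fin 6) : ⁅FF k i, FF k j⁆ =
    (if i = 0 ∧ j = 1 then FF k 4 else if i = 1 ∧ j = 0 then -FF k 4
      else if i = 2 ∧ j = 3 then FF k 5 else if i = 3 ∧ j = 2 then -FF k 5
      else (0 : KK k)) := by
  have hF4 : ∀ a : KK k, ⁅a, FF k 4⁆ = 0 := fun a => by
    show ⁅a, ππ k ⁅xx k 0, xx k 1⁆⁆ = 0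
    rw [(ππ k).map_lie]; exact Ktrip k _ _ _
  have hF5 : ∀ a : KK k, ⁅a, FF k 5⁆ = 0 := fun a => by
    show ⁅a, ππ k ⁅xx k 2, xx k 3⁆⁆ = 0
    rw [(ππ k).map_lie]; exact Ktrip k _ _ _
  have hF4' : ∀ a : KK k, ⁅FF k 4, a⁆ = 0 := fun a => by rw [← lie_skew, hF4, neg_zero]
  have hF5' : ∀ a : KK k, ⁅FF k 5, a⁆ = 0 := fun a => by rw [← lie_skew, hF5, neg_zero]
  have hz : ∀ i j : Fin 4, ⁅xx k i, xx k j⁆ ∈ R1 k →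
      ⁅ππ k (xx k i), ππ k (xx k j)⁆ = 0 := by
    intro i j hij
    rw [← (ππ k).map_lie]; exact ππ_R1 k _ hij
  have m02 : (⁅xx k 0, xx k 2⁆ : FL k) ∈ R1 k := LieSubmodule.subset_lieSpan (by simp [R1])
  have m03 : (⁅xx k 0, xx k 3⁆ : FL k) ∈ R1 k := LieSubmodule.subset_lieSpan (by simp [R1])
  have m12 : (⁅xx k 1, xx k 2⁆ : FL k) ∈ R1 k := LieSubmodule.subset_lieSpan (by simp [R1])
  have m13 : (⁅xx k 1, xx k 3⁆ : FL k) ∈ R1 k := LieSubmodule.subset_lieSpan (by simp [R1])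
  have z02 : ⁅FF k 0, FF k 2⁆ = 0 := by
    show ⁅ππ k (xx k 0), ππ k (xx k 2)⁆ = 0; exact hz _ _ m02
  have z03 : ⁅FF k 0, FF k 3⁆ = 0 := by
    show ⁅ππ k (xx k 0), ππ k (xx k 3)⁆ = 0; exact hz _ _ m03
  have z12 : ⁅FF k 1, FF k 2⁆ = 0 := by
    show ⁅ππ k (xx k 1), ππ k (xx k 2)⁆ = 0; exact hz _ _ m12
  have z13 : ⁅FF k 1, FF k 3⁆ = 0 := by
    show ⁅ππ k (xx k 1), ππ k (xx k 3)⁆ = 0; exact hz _ _ m13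
  have z20 : ⁅FF k 2, FF k 0⁆ = 0 := by rw [← lie_skew, z02, neg_zero]
  have z30 : ⁅FF k 3, FF k 0⁆ = 0 := by rw [← lie_skew, z03, neg_zero]
  have z21 : ⁅FF k 2, FF k 1⁆ = 0 := by rw [← lie_skew, z12, neg_zero]
  have z31 : ⁅FF k 3, FF k 1⁆ = 0 := by rw [← lie_skew, z13, neg_zero]
  have e01 : ⁅FF k 0, FF k 1⁆ = FF k 4 := by
    show ⁅ππ k (xx k 0), ππ k (xx k 1)⁆ = ππ k ⁅xx k 0, xx k 1⁆
    exact ((ππ k).map_lie _ _).symm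
  have e23 : ⁅FF k 2, FF k 3⁆ = FF k 5 := by
    show ⁅ππ k (xx k 2), ππ k (xx k 3)⁆ = ππ k ⁅xx k 2, xx k 3⁆
    exact ((ππ k).map_lie _ _).symm
  have e10 : ⁅FF k 1, FF k 0⁆ = -FF k 4 := by
    rw [← e01]; exact (lie_skew _ _).symm
  have e32 : ⁅FF k 3, FF k 2⁆ = -FF k 5 := by
    rw [← e23]; exact (lie_skew _ _).symm
  fin_cases i <;> fin_cases j <;> simp +decide only [if_true, if_false, reduceIte] <;>
    first
      | exact lie_self _
      | exact e01
      | exact e10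
      | exact e23
      | exact e32
      | exact z02
      | exact z03
      | exact z12
      | exact z13
      | exact z20
      | exact z30
      | exact z21
      | exact z31
      | exact hF4 _
      | exact hF5 _
      | exact hF4' _
      | exact hF5' _

/-- The linear inverse `MM → KK`. -/
noncomputable def ιι : MM k →ₗ[k] KK k := Module.Basis.constr (MM.bb) k (FF k)

lemma ιι_E (i : Fin 6) : ιι k (MM.E i) = FF k i := by
  rw [← MM.bb_apply]; exact Module.Basis.constr_basis _ _ _ _

lemma ιι_lie (u v : MM k) : ιι k ⁅u, v⁆ = ⁅ιι k u, ιι k v⁆ := by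
  have hB : (LinearMap.mk₂ k (fun u v : MM k => ιι k ⁅u, v⁆)
      (fun u u' v => show ιι k ⁅u + u', v⁆ = ιι k ⁅u, v⁆ + ιι k ⁅u', v⁆ by
        rw [add_lie, map_add])
      (fun c u v => show ιι k ⁅c • u, v⁆ = c • ιι k ⁅u, v⁆ by rw [smul_lie, map_smul])
      (fun u v v' => show ιι k ⁅u, v + v'⁆ = ιι k ⁅u, v⁆ + ιι k ⁅u, v'⁆ by
        rw [lie_add, map_add])
      (fun c u v => show ιι k ⁅u, c • v⁆ = c • ιι k ⁅u, v⁆ by rw [lie_smul, map_smul]))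
      = (LinearMap.mk₂ k (fun u v : MM k => ⁅ιι k u, ιι k v⁆)
      (fun u u' v => show ⁅ιι k (u + u'), ιι k v⁆ = ⁅ιι k u, ιι k v⁆ + ⁅ιι k u', ιι k v⁆ by
        rw [map_add, add_lie])
      (fun c u v => show ⁅ιι k (c • u), ιι k v⁆ = c • ⁅ιι k u, ιι k v⁆ by
        rw [map_smul, smul_lie])
      (fun u v v' => show ⁅ιι k u, ιι k (v + v')⁆ = ⁅ιι k u, ιι k v⁆ + ⁅ιι k u, ιι k v'⁆ by
        rw [map_add, lie_add])
      (fun c u v => show ⁅ιι k u, ιι k (c • v)⁆ = c • ⁅ιι k u, ιι k v⁆ by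
        rw [map_smul, lie_smul])) := by
    apply Module.Basis.ext (MM.bb (k := k))
    intro i
    apply Module.Basis.ext (MM.bb (k := k))
    intro j
    show ιι k ⁅(MM.bb (k := k)) i, (MM.bb (k := k)) j⁆
        = ⁅ιι k ((MM.bb (k := k)) i), ιι k ((MM.bb (k := k)) j)⁆
    rw [MM.bb_apply, MM.bb_apply, MM.E_br, ιι_E, ιι_E, FF_br]
    split_ifs <;> simp only [map_neg, map_zero, ιι_E]
  exact LinearMap.congr_fun (LinearMap.congr_fun hB u) v

/-- `ιι` as a Lie algebra homomorphism. -/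
noncomputable def ιhom : MM k →ₗ⁅k⁆ KK k :=
  { toLinearMap := ιι k, map_lie' := fun {u v} => ιι_lie k u v }

lemma ψψ_FF (i : Fin 6) : (ψψ k).toLinearMap (FF k i) = MM.E i := by
  have c01 : ⁅(MM.E 0 : MM k), (MM.E 1 : MM k)⁆ = MM.E 4 := by
    rw [MM.E_br (k := k)]; simp +decide only [if_true, if_false, reduceIte]
  have c23 : ⁅(MM.E 2 : MM k), (MM.E 3 : MM k)⁆ = MM.E 5 := by
    rw [MM.E_br (k := k)]; simp +decide only [if_true, if_false, reduceIte]
  fin_cases i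
  · show ψψ k (ππ k (xx k 0)) = MM.E 0
    exact (ψψ_ππ k _).trans (φφ_of k 0)
  · show ψψ k (ππ k (xx k 1)) = MM.E 1
    exact (ψψ_ππ k _).trans (φφ_of k 1)
  · show ψψ k (ππ k (xx k 2)) = MM.E 2
    exact (ψψ_ππ k _).trans (φφ_of k 2)
  · show ψψ k (ππ k (xx k 3)) = MM.E 3
    exact (ψψ_ππ k _).trans (φφ_of k 3)
  · show ψψ k (ππ k ⁅xx k 0, xx k 1⁆) = MM.E 4
    rw [ψψ_ππ, LieHom.map_lie, φφ_of, φφ_of]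
    show ⁅(MM.E 0 : MM k), (MM.E 1 : MM k)⁆ = MM.E 4
    exact c01
  · show ψψ k (ππ k ⁅xx k 2, xx k 3⁆) = MM.E 5
    rw [ψψ_ππ, LieHom.map_lie, φφ_of, φφ_of]
    show ⁅(MM.E 2 : MM k), (MM.E 3 : MM k)⁆ = MM.E 5
    exact c23

lemma ψψ_ιι : (ψψ k).toLinearMap.comp (ιι k) = LinearMap.id := by
  apply Module.Basis.ext (MM.bb (k := k))
  intro i
  rw [LinearMap.comp_apply, LinearMap.id_apply, MM.bb_apply, ιι_E]
  exact ψψ_FF k i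

lemma ιι_ψψ (y : KK k) : ιι k (ψψ k y) = y := by
  have key : ((ιhom k).comp (ψψ k)).comp (ππ k) = ππ k := by
    apply FreeLieAlgebra.hom_ext
    intro i
    show ιhom k (ψψ k (ππ k (FreeLieAlgebra.of k i))) = ππ k (FreeLieAlgebra.of k i)
    rw [show ππ k (FreeLieAlgebra.of k i) = ππ k (xx k i) from rfl, ψψ_ππ, φφ_of]
    show ιι k (Ev k i) = ππ k (xx k i)
    simp only [Ev]
    show ιι k (MM.E (Fin.castLE (by omega) i)) = ππ k (xx k i)
    rw [ιι_E]
    fin_cases i <;> rfl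
  obtain ⟨a, rfl⟩ := ππ_surj k y
  exact LieHom.congr_fun key a

lemma ψψ_inj : Function.Injective (ψψ k) := fun a b hab => by
  rw [← ιι_ψψ k a, ← ιι_ψψ k b, hab]

/-- The linear equivalence `KK ≃ MM`. -/
noncomputable def ee : KK k ≃ₗ[k] MM k :=
  LinearEquiv.ofLinear (ψψ k).toLinearMap (ιι k) (ψψ_ιι k)
    (LinearMap.ext fun y => ιι_ψψ k y)

/-- The main computation. -/
theorem main : ∃ v : KK k, v ≠ 0 ∧
    Module.finrank k (LinearMap.ker (LieAlgebra.ad k (KK k) v)) = 5 := by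
  refine ⟨ππ k (xx k 0), ?_, ?_⟩
  · intro hv
    have h1 : ψψ k (ππ k (xx k 0)) = MM.E 0 := (ψψ_ππ k _).trans (φφ_of k 0)
    rw [hv, map_zero] at h1
    have h2 := congrFun h1.symm 0
    rw [show (MM.E 0 : MM k) 0 = 1 from rfl] at h2
    exact one_ne_zero h2
  · set pr : MM k →ₗ[k] k :=
      { toFun := fun u => u 1, map_add' := fun _ _ => rfl, map_smul' := fun _ _ => rfl }
      with hpr
    have adE0 : ∀ u : MM k, ⁅(MM.E 0 : MM k), u⁆ = 0 ↔ u 1 = 0 := by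
      intro u
      constructor
      · intro h
        have h4 := congrFun h 4
        simpa [MM.lie_def, MM.br, MM.E, MM.zeroap] using h4
      · intro h
        funext i
        fin_cases i <;> simp [MM.lie_def, MM.br, MM.E, MM.zeroap, h]
    have hker : LinearMap.ker (LieAlgebra.ad k (KK k) (ππ k (xx k 0))) =
        Submodule.comap (ee k : KK k →ₗ[k] MM k) (LinearMap.ker pr) := by
      ext w
      rw [LinearMap.mem_ker, Submodule.mem_comap, LinearMap.mem_ker, LieAlgebra.ad_apply]
      have heψ : (ee k : KK k →ₗ[k] MM k) w = ψψ k w := rfl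
      rw [heψ]
      constructor
      · intro h
        have h5 : ψψ k ⁅ππ k (xx k 0), w⁆ = 0 := by rw [h, map_zero]
        rw [LieHom.map_lie, (ψψ_ππ k _).trans (φφ_of k 0)] at h5
        exact (adE0 (ψψ k w)).mp h5
      · intro h
        apply ψψ_inj k
        rw [LieHom.map_lie, (ψψ_ππ k _).trans (φφ_of k 0), map_zero]
        exact (adE0 (ψψ k w)).mpr h
    rw [hker, Submodule.comap_equiv_eq_map_symm, LinearEquiv.finrank_map_eq]
    have hrank := LinearMap.finrank_range_add_finrank_ker pr
    have hsurj : LinearMap.range pr = ⊤ := by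
      rw [LinearMap.range_eq_top]
      exact fun c => ⟨(fun _ => c : MM k), rfl⟩
    rw [hsurj, finrank_top, Module.finrank_self] at hrank
    have hdim : Module.finrank k (MM k) = 6 := by
      rw [Module.finrank_eq_card_basis (MM.bb (k := k)), Fintype.card_fin]
    omega

end Main

/-- let `k` be a field of odd characteristic and `g ∈ k×` a non-square.
Let `K₁` be the class-2 quotient of `L/(x₁₃, x₁₄, x₂₃, x₂₄)`, `L` free on `x₁,…,x₄`.
Then `K₁` contains a nonzero element whose centralizer has `k`-dimension `5`. -/
theorem exists_five_dimensional_centralizer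
    {k : Type*} [Field k] (hodd : Odd (ringChar k))
    (g : k) (hg : g ≠ 0) (hns : ∀ x : k, x ^ 2 ≠ g) :
    let L := FreeLieAlgebra k (Fin 4)
    let x : Fin 4 → L := FreeLieAlgebra.of k
    let r1 : LieIdeal k L := LieSubmodule.lieSpan k L
      {⁅x 0, x 2⁆, ⁅x 0, x 3⁆, ⁅x 1, x 2⁆, ⁅x 1, x 3⁆}
    ∃ v : (L ⧸ r1) ⧸ LieModule.lowerCentralSeries k (L ⧸ r1) (L ⧸ r1) 2, v ≠ 0 ∧
      Module.finrank k
        (LinearMap.ker (LieAlgebra.ad k ((L ⧸ r1) ⧸ LieModule.lowerCentralSeries k (L ⧸ r1) (L ⧸ r1) 2) v)) = 5 := by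
  intro L x r1
  exact main k
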